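/- For an exp-channel with τ > 0, V_th ∈ (0,1), and T_p > 0, the unique fixed point δ_min with δ↑(-δ_min) = δ_min equals T_p. -/

import Mathlib

/-- Rising delay function of an exp-channel. -/
noncomputable def deltaUp (τ Tp Vth T : ℝ) : ℝ :=
  τ * Real.log (1 - Real.exp (-(T + Tp - τ * Real.log Vth) / τ)) +
    Tp - τ * Real.log (1 - Vth)

/-- For a strictly causal exp-channel, the unique fixed point `δ_min` with
`δ↑(-δ_min) = δ_min` equals `T_p`. -/
theorem stmt_7 (τ Tp Vth : ℝ) (hτ : 0 < τ) (hV : Vth ∈ Set.Ioo (0:ℝ) 1)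
    (hTp : 0 < Tp) :
    deltaUp τ Tp Vth (-Tp) = Tp ∧
      ∀ m : ℝ, 0 < m → 0 < -m + Tp - τ * Real.log Vth →
        deltaUp τ Tp Vth (-m) = m → m = Tp := by
  obtain ⟨hV0, hV1⟩ := hV
  have hτ' : τ ≠ 0 := ne_of_gt hτ
  constructor
  · unfold deltaUp
    have h1 : -(-Tp + Tp - τ * Real.log Vth) / τ = Real.log Vth := by
      field_simp
      ring
    rw [h1, Real.exp_log hV0]
    ring
  · intro m hm h2 heq
    unfold deltaUp at heq
    have hexp : Real.exp (-(-m + Tp - τ * Real.log Vth) / τ)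
        = Vth * Real.exp ((m - Tp) / τ) := by
      rw [show -(-m + Tp - τ * Real.log Vth) / τ = Real.log Vth + (m - Tp) / τ by
        field_simp; ring]
      rw [Real.exp_add, Real.exp_log hV0]
    have hlt : Vth * Real.exp ((m - Tp) / τ) < 1 := by
      rw [← hexp]
      have : -(-m + Tp - τ * Real.log Vth) / τ < 0 := by
        apply div_neg_of_neg_of_pos _ hτ
        linarith
      calc Real.exp _ < Real.exp 0 := Real.exp_lt_exp.mpr this
        _ = 1 := Real.exp_zero
    rw [hexp] at heq
    have hpos : 0 < 1 - Vth * Real.exp ((m - Tp) / τ) := by linarith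
    have hpos2 : 0 < (1 - Vth) * Real.exp ((m - Tp) / τ) :=
      mul_pos (by linarith) (Real.exp_pos _)
    have hlog : Real.log (1 - Vth * Real.exp ((m - Tp) / τ))
        = Real.log ((1 - Vth) * Real.exp ((m - Tp) / τ)) := by
      rw [Real.log_mul (by linarith) (Real.exp_ne_zero _), Real.log_exp]
      have : τ * Real.log (1 - Vth * Real.exp ((m - Tp) / τ))
          = τ * Real.log (1 - Vth) + (m - Tp) := by linarith
      field_simp
      linarith [this]
    have heq2 : 1 - Vth * Real.exp ((m - Tp) / τ)
        = (1 - Vth) * Real.exp ((m - Tp) / τ) := by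
      have := congrArg Real.exp hlog
      rwa [Real.exp_log hpos, Real.exp_log hpos2] at this
    have hE : Real.exp ((m - Tp) / τ) = 1 := by nlinarith [Real.exp_pos ((m - Tp) / τ)]
    have : (m - Tp) / τ = 0 := by
      have h := congrArg Real.log hE
      rwa [Real.log_exp, Real.log_one] at h
    field_simp at this
    linarith
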